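/- Let P be a positive system of roots of L, let h ∈ H satisfy α(h) ≠ 0 for every root α, and let n ∈ N := Σ_{α∈P} L_α. Then there exists u ∈ N such that ad u is nilpotent and exp(ad u)(h + n) = h. (Surjectivity part of the isomorphism U × 𝔱_gen ≅ 𝔟_gen established, at the level of points, in the paper's proof of the lemma comparing Hamiltonian reduction with restriction over the generic locus.) -/

import Mathlib

open LieModule LieAlgebra

/-- The exponential `Σ_{k ≥ 0} (1/k!) • f ^ k` of a nilpotent endomorphism of a
finite-dimensional space.  A nilpotent endomorphism `f` of a space of dimension `d`
satisfies `f ^ d = 0`, so truncating at `k ≤ d` computes the full (finite) sum. -/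
noncomputable def expNilpotent {K L : Type*} [Field K] [AddCommGroup L] [Module K L]
    (f : Module.End K L) : Module.End K L :=
  ∑ k ∈ Finset.range (Module.finrank K L + 1), (k.factorial : K)⁻¹ • f ^ k

lemma expNilpotent_zero_apply {K L : Type*} [Field K] [AddCommGroup L] [Module K L] (x : L) :
    expNilpotent (0 : Module.End K L) x = x := by
  rw [expNilpotent, LinearMap.sum_apply]
  rw [Finset.sum_eq_single_of_mem 0 (by simp)]
  · simp
  · intro j _ hj
    rw [zero_pow hj]
    simp

lemma expNilpotent_apply {K L : Type*} [Field K] [AddCommGroup L] [Module K L]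
    (f : Module.End K L) (x : L) :
    expNilpotent f x
      = ∑ k ∈ Finset.range (Module.finrank K L + 1), (k.factorial : K)⁻¹ • (f ^ k) x := by
  rw [expNilpotent, LinearMap.sum_apply]
  simp

lemma expNilpotent_step {K : Type*} [Field K] {L : Type*} [LieRing L] [LieAlgebra K L]
    (A B C : Submodule K L)
    (hAA : ∀ a ∈ A, ∀ b ∈ A, ⁅a, b⁆ ∈ A)
    (hAB : ∀ a ∈ A, ∀ b ∈ B, ⁅a, b⁆ ∈ C)
    (hAC : ∀ a ∈ A, ∀ c ∈ C, ⁅a, c⁆ ∈ C)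
    (hBA : B ≤ A)
    {h₀ n u v : L} (hu : u ∈ A) (hv : v ∈ B) (hn : n ∈ A)
    (hhA : ∀ a ∈ A, ⁅a, h₀⁆ ∈ A)
    (hvh : ⁅v, h₀⁆ ∈ B)
    (hrank : 1 ≤ Module.finrank K L) :
    expNilpotent (ad K L (u + v)) (h₀ + n) - expNilpotent (ad K L u) (h₀ + n) - ⁅v, h₀⁆ ∈ C := by
  have hBC : ∀ b ∈ B, ∀ a ∈ A, ⁅b, a⁆ ∈ C := by
    intro b hb a ha
    rw [← lie_skew]
    exact neg_mem (hAB a ha b hb)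
  have hpow : ∀ j, 1 ≤ j → ((ad K L u) ^ j) (h₀ + n) ∈ A := by
    intro j hj
    induction j with
    | zero => omega
    | succ j ih =>
      rcases Nat.eq_zero_or_pos j with hj0 | hj1
      · subst hj0
        rw [pow_one, ad_apply, lie_add]
        exact add_mem (hhA u hu) (hAA u hu n hn)
      · rw [pow_succ', Module.End.mul_apply, ad_apply]
        exact hAA u hu _ (ih hj1)
  have hA1 : ((ad K L (u + v)) ^ 1) (h₀ + n) - ((ad K L u) ^ 1) (h₀ + n)
      = ⁅v, h₀⁆ + ⁅v, n⁆ := by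
    simp only [pow_one, ad_apply, add_lie, lie_add]
    abel
  have hrec : ∀ j, ((ad K L (u + v)) ^ (j + 1)) (h₀ + n) - ((ad K L u) ^ (j + 1)) (h₀ + n)
      = ⁅u + v, ((ad K L (u + v)) ^ j) (h₀ + n) - ((ad K L u) ^ j) (h₀ + n)⁆
        + ⁅v, ((ad K L u) ^ j) (h₀ + n)⁆ := by
    intro j
    rw [pow_succ', pow_succ', Module.End.mul_apply, Module.End.mul_apply, ad_apply, ad_apply]
    simp only [lie_sub, add_lie]
    abel
  have huv : u + v ∈ A := add_mem hu (hBA hv)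
  have hA2 : ∀ j, 2 ≤ j →
      ((ad K L (u + v)) ^ j) (h₀ + n) - ((ad K L u) ^ j) (h₀ + n) ∈ C := by
    intro j hj
    induction j, hj using Nat.le_induction with
    | base =>
      rw [show (2 : ℕ) = 1 + 1 from rfl, hrec 1, hA1, lie_add]
      refine add_mem (add_mem ?_ ?_) ?_
      · exact hAB _ huv _ hvh
      · exact hAC _ huv _ (hBC v hv n hn)
      · exact hBC v hv _ (hpow 1 le_rfl)
    | succ j hj ih =>
      rw [hrec j]
      exact add_mem (hAC _ huv _ ih) (hBC v hv _ (hpow j (by omega)))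
  have hdiff : expNilpotent (ad K L (u + v)) (h₀ + n) - expNilpotent (ad K L u) (h₀ + n)
      = ∑ j ∈ Finset.range (Module.finrank K L + 1),
          (j.factorial : K)⁻¹ • (((ad K L (u + v)) ^ j) (h₀ + n) - ((ad K L u) ^ j) (h₀ + n)) := by
    rw [expNilpotent_apply, expNilpotent_apply, ← Finset.sum_sub_distrib]
    refine Finset.sum_congr rfl fun j _ => ?_
    rw [smul_sub]
  rw [hdiff]
  have h1mem : 1 ∈ Finset.range (Module.finrank K L + 1) := by
    simp only [Finset.mem_range]; omega
  rw [← Finset.sum_erase_add _ _ h1mem, add_sub_assoc]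
  refine add_mem (Submodule.sum_mem _ fun j hj => ?_) ?_
  · rcases Nat.eq_zero_or_pos j with hj0 | hj1
    · subst hj0
      simp only [pow_zero, Module.End.one_apply, sub_self, smul_zero]
      exact zero_mem _
    · have hj1' : j ≠ 1 := (Finset.mem_erase.mp hj).1
      exact Submodule.smul_mem _ _ (hA2 j (by omega))
  · rw [show (((1 : ℕ).factorial : K))⁻¹ = 1 by simp, one_smul, hA1, add_sub_cancel_left]
    exact hBC v hv n hn


section Aux

variable {K : Type*} [Field K] {L : Type*} [LieRing L] [LieAlgebra K L]
variable {H : LieSubalgebra K L} [LieRing.IsNilpotent H]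

/-- Weights reachable from `S` by adding `k` elements of `P`, staying among weights. -/
def reachSet (P : Set (H → K)) : ℕ → Set (H → K) → Set (H → K)
  | 0, S => S
  | k+1, S => {ψ | (∃ χ ∈ reachSet P k S, ∃ α ∈ P, ψ = α + χ) ∧ rootSpace H ψ ≠ ⊥}

lemma mem_biSup_rootSpace {S : Set (H → K)} {ψ : H → K} (hψ : ψ ∈ S) {x : L}
    (hx : x ∈ rootSpace H ψ) : x ∈ ⨆ χ ∈ S, rootSpace H χ :=
  (le_iSup₂ (f := fun χ (_ : χ ∈ S) => rootSpace H χ) ψ hψ) hx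

/-- Core bracket lemma. -/
lemma lie_mem_biSup {P S S' : Set (H → K)}
    (hcl : ∀ χ ∈ S, ∀ α ∈ P, rootSpace H (α + χ) ≠ ⊥ → α + χ ∈ S')
    {u x : L} (hu : u ∈ ⨆ α ∈ P, rootSpace H α) (hx : x ∈ ⨆ χ ∈ S, rootSpace H χ) :
    ⁅u, x⁆ ∈ ⨆ χ ∈ S', rootSpace H χ := by
  rw [iSup_subtype'] at hu hx
  induction hu using LieSubmodule.iSup_induction' with
  | mem α u hu =>
    induction hx using LieSubmodule.iSup_induction' with
    | mem χ x hx =>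
      have hm : ⁅u, x⁆ ∈ rootSpace H ((α : H → K) + (χ : H → K)) :=
        lie_mem_genWeightSpace_of_mem_genWeightSpace hu hx
      by_cases hbot : rootSpace H ((α : H → K) + (χ : H → K)) = ⊥
      · rw [hbot, LieSubmodule.mem_bot] at hm
        simp [hm]
      · exact mem_biSup_rootSpace (hcl χ χ.2 α α.2 hbot) hm
    | zero => simp
    | add x y hx hy cx cy => rw [lie_add]; exact add_mem cx cy
  | zero => simp
  | add x y hx hy cx cy => rw [add_lie]; exact add_mem cx cy


variable {P : Set (H → K)}

lemma pair_sum_ne_zero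
    (hsum : ∀ (m : ℕ) (c : Fin (m + 1) → (H → K)), (∀ i, c i ∈ P) → ∑ i, c i ≠ 0)
    {α χ : H → K} (hα : α ∈ P) (hχ : χ ∈ P) : α + χ ≠ 0 := by
  have := hsum 1 ![α, χ] (by rw [Fin.forall_fin_two]; exact ⟨hα, hχ⟩)
  simpa [Fin.sum_univ_two] using this

lemma reachSet_subset
    (hadd : ∀ α ∈ P, ∀ β ∈ P, α + β ≠ 0 → rootSpace H (α + β) ≠ ⊥ → α + β ∈ P)
    (hsum : ∀ (m : ℕ) (c : Fin (m + 1) → (H → K)), (∀ i, c i ∈ P) → ∑ i, c i ≠ 0) :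
    ∀ k, reachSet P k P ⊆ P := by
  intro k
  induction k with
  | zero => exact fun _ h => h
  | succ k ih =>
    rintro ψ ⟨⟨χ, hχ, α, hα, rfl⟩, hbot⟩
    exact hadd α hα χ (ih hχ) (pair_sum_ne_zero hsum hα (ih hχ)) hbot

lemma reachSet_chain {S : Set (H → K)} (hS : S ⊆ {χ | rootSpace H χ ≠ ⊥}) :
    ∀ k, ∀ ψ ∈ reachSet P k S, ∃ c : ℕ → (H → K), c k = ψ ∧
      (∀ i ≤ k, rootSpace H (c i) ≠ ⊥) ∧
      (∀ i j, i < j → j ≤ k → ∃ m, ∃ γ : Fin (m + 1) → (H → K),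
        (∀ t, γ t ∈ P) ∧ c j = c i + ∑ t, γ t) := by
  intro k
  induction k with
  | zero =>
    intro ψ hψ
    exact ⟨fun _ => ψ, rfl, fun i _ => hS hψ, fun i j hij hj => by omega⟩
  | succ k ih =>
    rintro ψ ⟨⟨χ, hχ, α, hα, rfl⟩, hbot⟩
    obtain ⟨c, hck, hcw, hcp⟩ := ih χ hχ
    refine ⟨fun i => if i ≤ k then c i else α + χ, by simp, ?_, ?_⟩
    · intro i hi
      by_cases h' : i ≤ k
      · simpa [h'] using hcw i h'
      · simpa [h'] using hbot
    · intro i j hij hj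
      by_cases hjk : j ≤ k
      · have hik : i ≤ k := le_trans (Nat.le_of_lt hij) hjk
        obtain ⟨m, γ, hγ, hcj⟩ := hcp i j hij hjk
        exact ⟨m, γ, hγ, by simpa [hjk, hik] using hcj⟩
      · have hjeq : j = k + 1 := by omega
        have hik : i ≤ k := by omega
        have hjk' : ¬ j ≤ k := by omega
        by_cases hik' : i = k
        · refine ⟨0, fun _ => α, fun _ => hα, ?_⟩
          simp only [if_neg hjk', if_pos hik, Fin.sum_univ_one]
          rw [hik', hck]; simp [Finset.sum_const, add_comm]
        · obtain ⟨m, γ, hγ, hcj⟩ := hcp i k (by omega) le_rfl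
          refine ⟨m + 1, Fin.cons α γ,
            fun t => Fin.cases (by simp [hα]) (by simp [hγ]) t, ?_⟩
          simp only [if_neg hjk', if_pos hik, Fin.sum_cons]
          rw [hck] at hcj
          rw [hcj]; abel

variable [Module.Finite K L]

lemma reachSet_lt_card {S : Set (H → K)} (hS : S ⊆ {χ | rootSpace H χ ≠ ⊥})
    (hsum : ∀ (m : ℕ) (c : Fin (m + 1) → (H → K)), (∀ i, c i ∈ P) → ∑ i, c i ≠ 0)
    {k : ℕ} {ψ : H → K} (hψ : ψ ∈ reachSet P k S) :
    k < Nat.card {χ : H → K | rootSpace H χ ≠ ⊥} := by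
  obtain ⟨c, -, hcw, hcp⟩ := reachSet_chain hS k ψ hψ
  haveI : IsNoetherian K L := inferInstance
  haveI : Finite {χ : H → K | rootSpace H χ ≠ ⊥} :=
    (LieModule.finite_genWeightSpace_ne_bot K H L).to_subtype
  have hinj : Function.Injective
      (fun i : Fin (k + 1) => (⟨c i, hcw i (by omega)⟩ : {χ : H → K | rootSpace H χ ≠ ⊥})) := by
    intro i j hij
    simp only [Subtype.mk.injEq] at hij
    by_contra hne
    have hne' : (i : ℕ) ≠ (j : ℕ) := fun h => hne (Fin.ext h)
    rcases Nat.lt_or_ge (i : ℕ) (j : ℕ) with h' | h'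
    · obtain ⟨m, γ, hγ, hcj⟩ := hcp i j h' (by omega)
      rw [← hij] at hcj
      exact hsum m γ hγ (by
        have := congrArg (fun z => z - c (i : ℕ)) hcj
        simpa using this.symm)
    · have h'' : (j : ℕ) < (i : ℕ) := by omega
      obtain ⟨m, γ, hγ, hcj⟩ := hcp j i h'' (by omega)
      rw [hij] at hcj
      exact hsum m γ hγ (by
        have := congrArg (fun z => z - c (j : ℕ)) hcj
        simpa using this.symm)
  have := Nat.card_le_card_of_injective _ hinj
  have h2 : Nat.card (Fin (k + 1)) = k + 1 := Nat.card_eq_fintype_card.trans (Fintype.card_fin _)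
  exact lt_of_lt_of_le (by omega) this


variable {P : Set (H → K)}

lemma ad_pow_mem {u : L} (hu : u ∈ ⨆ α ∈ P, rootSpace H α) {S : Set (H → K)}
    {x : L} (hx : x ∈ ⨆ χ ∈ S, rootSpace H χ) (j : ℕ) :
    ((ad K L u) ^ j) x ∈ ⨆ χ ∈ reachSet P j S, rootSpace H χ := by
  induction j with
  | zero => simpa [reachSet] using hx
  | succ j ih =>
    rw [pow_succ', Module.End.mul_apply, ad_apply]
    refine lie_mem_biSup (fun χ hχ α hα hbot => ?_) hu ih
    show _ ∈ reachSet P (j+1) S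
    rw [reachSet]
    exact ⟨⟨χ, hχ, α, hα, rfl⟩, hbot⟩

variable [Module.Finite K L] [IsAlgClosed K]

lemma ad_pow_card_eq_zero {u : L} (hu : u ∈ ⨆ α ∈ P, rootSpace H α)
    (hsum : ∀ (m : ℕ) (c : Fin (m + 1) → (H → K)), (∀ i, c i ∈ P) → ∑ i, c i ≠ 0) :
    (ad K L u) ^ (Nat.card {χ : H → K | rootSpace H χ ≠ ⊥}) = 0 := by
  set W := {χ : H → K | rootSpace H χ ≠ ⊥} with hW
  set M := Nat.card W with hM
  have htop : (⨆ χ ∈ W, rootSpace H χ : LieSubmodule K H L) = ⊤ := by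
    refine le_antisymm le_top ?_
    rw [← iSup_genWeightSpace_eq_top K H L]
    refine iSup_le fun χ => ?_
    by_cases hχ : χ ∈ W
    · exact le_iSup₂ (f := fun χ (_ : χ ∈ W) => rootSpace H χ) χ hχ
    · rw [show genWeightSpace L χ = rootSpace H χ from rfl, not_not.mp hχ]
      exact bot_le
  have hempty : reachSet P M W = ∅ := by
    ext ψ; simp only [Set.mem_empty_iff_false, iff_false]
    intro hψ
    exact absurd (reachSet_lt_card (le_refl W) hsum hψ) (lt_irrefl M)
  ext x
  have hx : x ∈ (⨆ χ ∈ W, rootSpace H χ : LieSubmodule K H L) := htop ▸ LieSubmodule.mem_top x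
  have := ad_pow_mem hu hx M
  rw [hempty] at this
  simpa using this

/-- Surjectivity of `ad h` on a sup of root spaces with nonvanishing value at `h`. -/
lemma ad_h_surjOn {T : Set (H → K)} (h : H) (hne : ∀ χ ∈ T, χ h ≠ 0)
    {r : L} (hr : r ∈ ⨆ χ ∈ T, rootSpace H χ) :
    ∃ v ∈ (⨆ χ ∈ T, rootSpace H χ : LieSubmodule K H L), ⁅(h : L), v⁆ = r := by
  classical
  set V : LieSubmodule K H L := ⨆ χ ∈ T, rootSpace H χ with hV
  set f : Module.End K L := ad K L (h : L) with hf
  have hfeq : LieModule.toEnd K H L h = f := by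
    ext y
    simp [f, LieModule.toEnd_apply_apply, ad_apply, LieSubalgebra.coe_bracket_of_module]
  have hmap : ∀ x ∈ (V : Submodule K L), f x ∈ (V : Submodule K L) := by
    intro x hx
    rw [LieSubmodule.mem_toSubmodule] at hx ⊢
    have : ⁅h, x⁆ ∈ V := V.lie_mem hx
    rwa [LieSubalgebra.coe_bracket_of_module] at this
  have hVle : (V : Submodule K L) ≤ ⨆ μ, ⨆ _ : μ ≠ (0 : K), f.maxGenEigenspace μ := by
    rw [hV, LieSubmodule.iSup_toSubmodule]
    refine iSup_le fun χ => ?_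
    rw [LieSubmodule.iSup_toSubmodule]
    refine iSup_le fun hχ => ?_
    refine le_trans ?_ (le_iSup₂ (χ h) (hne χ hχ))
    intro x hx
    rw [LieSubmodule.mem_toSubmodule] at hx
    have := genWeightSpace_le_genWeightSpaceOf L h χ hx
    rw [mem_genWeightSpaceOf, hfeq] at this
    exact (Module.End.mem_maxGenEigenspace f (χ h) x).mpr this
  have hinj : ∀ x ∈ (V : Submodule K L), f x = 0 → x = 0 := by
    intro x hx hfx
    have h0 : x ∈ f.maxGenEigenspace 0 := by
      rw [Module.End.mem_maxGenEigenspace]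
      exact ⟨1, by simpa using hfx⟩
    have hd := (Module.End.independent_maxGenEigenspace f) 0
    have : x ∈ (⊥ : Submodule K L) := hd.le_bot ⟨h0, hVle hx⟩
    simpa using this
  let g : (V : Submodule K L) →ₗ[K] (V : Submodule K L) := f.restrict hmap
  have hginj : Function.Injective g := by
    rw [injective_iff_map_eq_zero]
    intro a ha
    have : f (a : L) = 0 := by
      have := congrArg (Subtype.val) ha
      simpa [g, LinearMap.restrict_apply] using this
    exact Subtype.ext (hinj a a.2 this)
  have hgsurj : Function.Surjective g := (LinearMap.injective_iff_surjective).mp hginj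
  obtain ⟨v, hv⟩ := hgsurj ⟨r, (LieSubmodule.mem_toSubmodule V).mpr hr⟩
  refine ⟨v, (LieSubmodule.mem_toSubmodule V).mp v.2, ?_⟩
  have := congrArg (Subtype.val) hv
  simpa [g, LinearMap.restrict_apply, hf, ad_apply] using this


end Aux

set_option maxHeartbeats 1000000 in
/-- **Every element of the generic Borel is unipotently conjugate to its Cartan component.**
`K` algebraically closed of characteristic zero, `L` a finite-dimensional Lie algebra over `K`
with nondegenerate Killing form, `H` a Cartan subalgebra.  Let `P` be a positive system of
roots, `h ∈ H` with `α h ≠ 0` for every root `α`, and `n ∈ N := Σ_{α ∈ P} L_α`.  Then there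
is `u ∈ N` with `ad u` nilpotent and `exp (ad u) (h + n) = h`. -/
theorem exists_exp_ad_eq_cartan_component
    {K : Type*} [Field K] [IsAlgClosed K] [CharZero K]
    {L : Type*} [LieRing L] [LieAlgebra K L] [Module.Finite K L]
    [LieAlgebra.IsKilling K L]
    (H : LieSubalgebra K L) [H.IsCartanSubalgebra]
    (P : Set (H → K))
    (hP : ∀ α ∈ P, α ≠ 0 ∧ rootSpace H α ≠ ⊥)
    (hxor : ∀ α : H → K, α ≠ 0 → rootSpace H α ≠ ⊥ → Xor' (α ∈ P) (-α ∈ P))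
    (hadd : ∀ α ∈ P, ∀ β ∈ P, α + β ≠ 0 → rootSpace H (α + β) ≠ ⊥ → α + β ∈ P)
    (hsum : ∀ (m : ℕ) (c : Fin (m + 1) → (H → K)),
      (∀ i, c i ∈ P) → ∑ i, c i ≠ 0)
    (h : H) (hgen : ∀ α : H → K, α ≠ 0 → rootSpace H α ≠ ⊥ → α h ≠ 0)
    (n : L) (hn : n ∈ ⨆ α ∈ P, rootSpace H α) :
    ∃ u ∈ ⨆ α ∈ P, rootSpace H α,
      IsNilpotent (LieAlgebra.ad K L u) ∧
        expNilpotent (LieAlgebra.ad K L u) ((h : L) + n) = (h : L) := by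
  classical
  rcases subsingleton_or_nontrivial L with hL | hL
  · refine ⟨0, zero_mem _, ⟨1, ?_⟩, Subsingleton.elim _ _⟩
    rw [pow_one, map_zero]
  set N : LieSubmodule K H L := ⨆ α ∈ P, rootSpace H α with hNdef
  -- the filtration by weights reachable by at least `k` steps
  set Rge : ℕ → Set (H → K) := fun k => {χ | ∃ m, k ≤ m ∧ χ ∈ reachSet P m P} with hRge
  set Np : ℕ → LieSubmodule K H L := fun k => ⨆ χ ∈ Rge k, rootSpace H χ with hNp
  set M : ℕ := Nat.card {χ : H → K | rootSpace H χ ≠ ⊥} with hM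
  have hPW : P ⊆ {χ : H → K | rootSpace H χ ≠ ⊥} := fun α hα => (hP α hα).2
  have hsub : ∀ m, reachSet P m P ⊆ P := reachSet_subset hadd hsum
  have hRgeP : ∀ k, Rge k ⊆ P := by
    rintro k χ ⟨m, -, hm⟩
    exact hsub m hm
  have hRganti : ∀ k, Rge (k + 1) ⊆ Rge k := by
    rintro k χ ⟨m, hkm, hm⟩
    exact ⟨m, by omega, hm⟩
  have hNpN : ∀ k, Np k ≤ N := fun k => biSup_mono (hRgeP k)
  have hNpanti : ∀ k, Np (k + 1) ≤ Np k := fun k => biSup_mono (hRganti k)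
  have hNNp0 : N ≤ Np 0 := biSup_mono (fun α hα => ⟨0, le_rfl, hα⟩)
  -- invariance of Lie submodules under ad h
  have hHV : ∀ (V : LieSubmodule K H L) (h' : H), ∀ x ∈ V, ⁅(h' : L), x⁆ ∈ V := by
    intro V h' x hx
    rw [← LieSubalgebra.coe_bracket_of_module]
    exact V.lie_mem hx
  -- bracket of N with the filtration
  have hNB : ∀ k, ∀ u ∈ N, ∀ x ∈ Np k, ⁅u, x⁆ ∈ Np (k + 1) := by
    intro k u hu x hx
    refine lie_mem_biSup (fun χ hχ α hα hbot => ?_) hu hx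
    obtain ⟨m, hkm, hm⟩ := hχ
    refine ⟨m + 1, by omega, ?_⟩
    show _ ∈ reachSet P (m + 1) P
    rw [reachSet]
    exact ⟨⟨χ, hm, α, hα, rfl⟩, hbot⟩
  have hNN : ∀ u ∈ N, ∀ x ∈ N, ⁅u, x⁆ ∈ N := by
    intro u hu x hx
    exact lie_mem_biSup
      (fun χ hχ α hα hbot => hadd α hα χ hχ (pair_sum_ne_zero hsum hα hχ) hbot) hu hx
  -- the filtration vanishes at stage M
  have hNpbot : Np M = ⊥ := by
    have hRgeMempty : Rge M = ∅ := by
      ext χ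
      simp only [Set.mem_empty_iff_false, iff_false]
      rintro ⟨m, hMm, hm⟩
      have := reachSet_lt_card hPW hsum hm
      omega
    rw [hNp]
    simp only [hRgeMempty]
    exact iSup_emptyset
  -- surjectivity of ad h on each stage of the filtration
  have hsurj : ∀ k, ∀ r ∈ Np k, ∃ v ∈ Np k, ⁅(h : L), v⁆ = r := by
    intro k r hr
    refine ad_h_surjOn h (fun χ hχ => ?_) hr
    have hχP := hRgeP k hχ
    exact hgen χ (hP χ hχP).1 (hP χ hχP).2
  -- nilpotency
  have hnil : ∀ u ∈ N, IsNilpotent (ad K L u) := by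
    intro u hu
    exact ⟨M, ad_pow_card_eq_zero hu hsum⟩
  have hrank : 1 ≤ Module.finrank K L := Module.finrank_pos
  -- the main induction
  have key : ∀ k, ∃ u, u ∈ N ∧
      expNilpotent (ad K L u) ((h : L) + n) - (h : L) ∈ Np k := by
    intro k
    induction k with
    | zero =>
      refine ⟨0, zero_mem _, ?_⟩
      rw [map_zero, expNilpotent_zero_apply, add_sub_cancel_left]
      exact hNNp0 hn
    | succ k ih =>
      obtain ⟨u, huN, hrem⟩ := ih
      obtain ⟨v, hvNp, hvh⟩ := hsurj k _ hrem
      refine ⟨u + v, add_mem huN (hNpN k hvNp), ?_⟩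
      have cAA : ∀ a ∈ (N : Submodule K L), ∀ b ∈ (N : Submodule K L),
          ⁅a, b⁆ ∈ (N : Submodule K L) := by
        intro a ha b hb
        rw [LieSubmodule.mem_toSubmodule] at ha hb ⊢
        exact hNN a ha b hb
      have cAB : ∀ a ∈ (N : Submodule K L), ∀ b ∈ ((Np k : LieSubmodule K H L) : Submodule K L),
          ⁅a, b⁆ ∈ ((Np (k + 1) : LieSubmodule K H L) : Submodule K L) := by
        intro a ha b hb
        rw [LieSubmodule.mem_toSubmodule] at ha hb ⊢
        exact hNB k a ha b hb
      have cAC : ∀ a ∈ (N : Submodule K L),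
          ∀ c ∈ ((Np (k + 1) : LieSubmodule K H L) : Submodule K L),
          ⁅a, c⁆ ∈ ((Np (k + 1) : LieSubmodule K H L) : Submodule K L) := by
        intro a ha c hc
        rw [LieSubmodule.mem_toSubmodule] at ha hc ⊢
        exact hNpanti (k + 1) (hNB (k + 1) a ha c hc)
      have cBA : ((Np k : LieSubmodule K H L) : Submodule K L) ≤ (N : Submodule K L) :=
        (LieSubmodule.toSubmodule_le_toSubmodule _ _).mpr (hNpN k)
      have chA : ∀ a ∈ (N : Submodule K L), ⁅a, (h : L)⁆ ∈ (N : Submodule K L) := by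
        intro a ha
        rw [LieSubmodule.mem_toSubmodule] at ha ⊢
        rw [← lie_skew]
        exact neg_mem (hHV N h a ha)
      have cvh : ⁅v, (h : L)⁆ ∈ ((Np k : LieSubmodule K H L) : Submodule K L) := by
        rw [LieSubmodule.mem_toSubmodule]
        rw [← lie_skew]
        exact neg_mem (hHV (Np k) h v hvNp)
      have step := expNilpotent_step (N : Submodule K L)
        ((Np k : LieSubmodule K H L) : Submodule K L)
        ((Np (k + 1) : LieSubmodule K H L) : Submodule K L)
        cAA cAB cAC cBA
        (LieSubmodule.mem_toSubmodule N |>.mpr huN)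
        (LieSubmodule.mem_toSubmodule (Np k) |>.mpr hvNp)
        (LieSubmodule.mem_toSubmodule N |>.mpr hn)
        chA cvh hrank
      rw [LieSubmodule.mem_toSubmodule] at step
      have hveq : ⁅v, (h : L)⁆ = -(expNilpotent (ad K L u) ((h : L) + n) - (h : L)) := by
        rw [← lie_skew, hvh]
      rw [show expNilpotent (ad K L (u + v)) ((h : L) + n) - (h : L)
          = (expNilpotent (ad K L (u + v)) ((h : L) + n)
              - expNilpotent (ad K L u) ((h : L) + n) - ⁅v, (h : L)⁆)
            + ((expNilpotent (ad K L u) ((h : L) + n) - (h : L)) + ⁅v, (h : L)⁆) from by abel]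
      have hz : (expNilpotent (ad K L u) ((h : L) + n) - (h : L)) + ⁅v, (h : L)⁆ = 0 := by
        rw [hveq]; exact add_neg_cancel _
      rw [hz, add_zero]
      exact step
  obtain ⟨u, huN, hrem⟩ := key M
  rw [hNpbot, LieSubmodule.mem_bot, sub_eq_zero] at hrem
  exact ⟨u, huN, hnil u huN, hrem⟩
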